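/- Let H₀ and H₁ be hermitian n×n complex matrices, let a ≤ b be reals and g > 0, and assume spectrum(H₀) ∩ ((a − g, a) ∪ (b, b + g)) = ∅. Set ε := ‖H₁ − H₀‖ and assume ε ≤ g/4. Then ‖P_{(a−g/2, b+g/2)}(H₁) − P_{[a,b]}(H₀)‖ ≤ 4(b − a + g)·ε/g². (Lipschitz continuity of the spectral projection onto a g-gapped sector under norm-small perturbations: ‖P(s₀+ε) − P(s₀)‖ = O(ε).) -/

import Mathlib

open scoped Matrix.Norms.L2Operator

/-- The orthogonal projection (as a matrix) onto the eigenspace of `H` for the (real)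
eigenvalue `κ`; it is `0` when `κ` is not an eigenvalue of `H`. -/
noncomputable def eigProj {n : Type*} [Fintype n] [DecidableEq n]
    (H : Matrix n n ℂ) (κ : ℝ) : Matrix n n ℂ :=
  Matrix.toEuclideanLin.symm
    ((Module.End.eigenspace (Matrix.toEuclideanLin H) (κ : ℂ)).subtype ∘ₗ
      (Submodule.orthogonalProjectionOnto (Module.End.eigenspace (Matrix.toEuclideanLin H) (κ : ℂ))).toLinearMap)

/-- The spectral projection of `H` onto a set `I ⊆ ℝ`, i.e. `Σ_{κ ∈ spectrum(H) ∩ I} Q_κ(H)`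
(the summands vanish off the spectrum, so the sum is finite). -/
noncomputable def specProj {n : Type*} [Fintype n] [DecidableEq n]
    (H : Matrix n n ℂ) (I : Set ℝ) : Matrix n n ℂ :=
  ∑ᶠ κ ∈ I, eigProj H κ

namespace SectorProjAux

open Matrix Metric
open scoped InnerProductSpace Real

variable {n : Type*} [Fintype n] [DecidableEq n]

lemma basisApply (H : Matrix n n ℂ) (hH : H.IsHermitian) (i : n) :
    Matrix.toEuclideanLin H (hH.eigenvectorBasis i)
      = (hH.eigenvalues i : ℂ) • hH.eigenvectorBasis i := by
  rw [Matrix.toEuclideanLin_apply]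
  show (WithLp.equiv 2 (n → ℂ)).symm (H *ᵥ ⇑(hH.eigenvectorBasis i)) = _
  rw [hH.mulVec_eigenvectorBasis i]
  simp [WithLp.toLp_smul]

lemma basisMem (H : Matrix n n ℂ) (hH : H.IsHermitian) (i : n) :
    hH.eigenvectorBasis i ∈
      Module.End.eigenspace (Matrix.toEuclideanLin H) ((hH.eigenvalues i : ℝ) : ℂ) := by
  rw [Module.End.mem_eigenspace_iff]; exact basisApply H hH i

lemma projApply (H : Matrix n n ℂ) (hH : H.IsHermitian) (κ : ℝ) (v : EuclideanSpace ℂ n) :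
    Matrix.toEuclideanLin (eigProj H κ) v
      = ∑ i, if hH.eigenvalues i = κ then ⟪hH.eigenvectorBasis i, v⟫_ℂ • hH.eigenvectorBasis i
        else 0 := by
  set E := Module.End.eigenspace (Matrix.toEuclideanLin H) (κ : ℂ) with hE
  rw [eigProj, LinearEquiv.apply_symm_apply]
  show ((Submodule.orthogonalProjectionOnto E v : EuclideanSpace ℂ n)) = _
  conv_lhs => rw [← (hH.eigenvectorBasis).sum_repr' v]
  rw [map_sum, Submodule.coe_sum]
  refine Finset.sum_congr rfl fun i _ => ?_
  rw [_root_.map_smul, Submodule.coe_smul]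
  by_cases h : hH.eigenvalues i = κ
  · rw [if_pos h]
    congr 1
    have hm := basisMem H hH i
    rw [h] at hm
    exact (Submodule.starProjection_eq_self_iff).mpr hm
  · rw [if_neg h]
    rw [Submodule.orthogonalProjectionOnto_apply_of_mem_orthogonal, Submodule.coe_zero,
      smul_zero]
    intro u hu
    have hT := (Matrix.isHermitian_iff_isSymmetric.mp hH)
    have hne : ((hH.eigenvalues i : ℝ) : ℂ) ≠ (κ : ℂ) := by exact_mod_cast h
    have h2 : ⟪(hH.eigenvectorBasis i : EuclideanSpace ℂ n), u⟫_ℂ = 0 :=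
      hT.orthogonalFamily_eigenspaces hne ⟨_, basisMem H hH i⟩ ⟨u, hu⟩
    exact inner_eq_zero_symm.mp h2

lemma toEuclideanLin_one : (Matrix.toEuclideanLin (1 : Matrix n n ℂ)) = LinearMap.id := by
  ext v; simp [Matrix.toEuclideanLin_apply]

lemma toEuclideanLin_mul (A B : Matrix n n ℂ) :
    Matrix.toEuclideanLin (A*B) = (Matrix.toEuclideanLin A) ∘ₗ (Matrix.toEuclideanLin B) := by
  rw [Matrix.toEuclideanLin_eq_toLin]
  exact Matrix.toLin_mul _ _ _ A B

lemma matrix_apply_le (M : Matrix n n ℂ) (v : EuclideanSpace ℂ n) :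
    ‖Matrix.toEuclideanLin M v‖ ≤ ‖M‖ * ‖v‖ := by
  rw [Matrix.l2_opNorm_def]
  exact (LinearMap.toContinuousLinearMap (Matrix.toEuclideanLin M)).le_opNorm v

lemma matrix_norm_le (M : Matrix n n ℂ) (C : ℝ) (hC : 0 ≤ C)
    (h : ∀ v : EuclideanSpace ℂ n, ‖Matrix.toEuclideanLin M v‖ ≤ C * ‖v‖) : ‖M‖ ≤ C := by
  rw [Matrix.l2_opNorm_def]
  exact ContinuousLinearMap.opNorm_le_bound _ hC h

lemma wsumApply (H : Matrix n n ℂ) (hH : H.IsHermitian) (f : ℝ → ℂ) (v : EuclideanSpace ℂ n) :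
    Matrix.toEuclideanLin
        (∑ κ ∈ Finset.image hH.eigenvalues Finset.univ, f κ • eigProj H κ) v
      = ∑ i, f (hH.eigenvalues i) • ⟪hH.eigenvectorBasis i, v⟫_ℂ • hH.eigenvectorBasis i := by
  calc Matrix.toEuclideanLin
        (∑ κ ∈ Finset.image hH.eigenvalues Finset.univ, f κ • eigProj H κ) v
      = ∑ κ ∈ Finset.image hH.eigenvalues Finset.univ,
          f κ • (Matrix.toEuclideanLin (eigProj H κ) v) := by
        rw [map_sum, LinearMap.sum_apply]
        exact Finset.sum_congr rfl fun κ _ => by rw [_root_.map_smul, LinearMap.smul_apply]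
    _ = ∑ κ ∈ Finset.image hH.eigenvalues Finset.univ, ∑ i,
          (if hH.eigenvalues i = κ
            then f κ • ⟪hH.eigenvectorBasis i, v⟫_ℂ • hH.eigenvectorBasis i else 0) := by
        refine Finset.sum_congr rfl fun κ _ => ?_
        rw [projApply H hH κ v, Finset.smul_sum]
        exact Finset.sum_congr rfl fun i _ => by rw [smul_ite, smul_zero]
    _ = ∑ i, ∑ κ ∈ Finset.image hH.eigenvalues Finset.univ,
          (if hH.eigenvalues i = κ
            then f κ • ⟪hH.eigenvectorBasis i, v⟫_ℂ • hH.eigenvectorBasis i else 0) :=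
        Finset.sum_comm
    _ = ∑ i, f (hH.eigenvalues i) • ⟪hH.eigenvectorBasis i, v⟫_ℂ • hH.eigenvectorBasis i := by
        refine Finset.sum_congr rfl fun i _ => ?_
        rw [Finset.sum_ite_eq, if_pos (Finset.mem_image_of_mem _ (Finset.mem_univ i))]

lemma eigProj_eq_zero (H : Matrix n n ℂ) (hH : H.IsHermitian) (κ : ℝ)
    (h : ∀ i, hH.eigenvalues i ≠ κ) : eigProj H κ = 0 := by
  apply Matrix.toEuclideanLin.injective
  apply LinearMap.ext; intro v
  rw [projApply H hH κ v]
  simp [h]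

lemma resSum_mul (H : Matrix n n ℂ) (hH : H.IsHermitian) (z : ℂ)
    (hz : ∀ i, z ≠ (hH.eigenvalues i : ℂ)) :
    (z • (1 : Matrix n n ℂ) - H) *
      (∑ κ ∈ Finset.image hH.eigenvalues Finset.univ, ((z - κ)⁻¹ : ℂ) • eigProj H κ) = 1 := by
  apply Matrix.toEuclideanLin.injective
  apply LinearMap.ext; intro v
  rw [toEuclideanLin_mul, LinearMap.comp_apply,
    wsumApply H hH (fun κ => ((z - κ)⁻¹ : ℂ)) v, toEuclideanLin_one, LinearMap.id_apply]
  rw [map_sub, _root_.map_smul, toEuclideanLin_one]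
  rw [LinearMap.sub_apply, LinearMap.smul_apply, LinearMap.id_apply, map_sum, Finset.smul_sum,
    ← Finset.sum_sub_distrib]
  have key : ∀ i, z • ((z - (hH.eigenvalues i : ℂ))⁻¹ •
        ⟪hH.eigenvectorBasis i, v⟫_ℂ • hH.eigenvectorBasis i)
      - (Matrix.toEuclideanLin H) ((z - (hH.eigenvalues i : ℂ))⁻¹ •
        ⟪hH.eigenvectorBasis i, v⟫_ℂ • hH.eigenvectorBasis i)
      = ⟪hH.eigenvectorBasis i, v⟫_ℂ • hH.eigenvectorBasis i := by
    intro i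
    rw [_root_.map_smul, _root_.map_smul, basisApply H hH i]
    simp only [smul_smul]
    rw [← sub_smul]
    congr 1
    have h1 : (z - (hH.eigenvalues i : ℂ))⁻¹ * (z - (hH.eigenvalues i : ℂ)) = 1 :=
      inv_mul_cancel₀ (sub_ne_zero.mpr (hz i))
    linear_combination ⟪hH.eigenvectorBasis i, v⟫_ℂ * h1
  rw [Finset.sum_congr rfl fun i _ => key i, (hH.eigenvectorBasis).sum_repr' v]

lemma resSum_norm (H : Matrix n n ℂ) (hH : H.IsHermitian) (z : ℂ) (d : ℝ) (hd : 0 < d)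
    (h : ∀ i, d ≤ ‖z - (hH.eigenvalues i : ℂ)‖) :
    ‖∑ κ ∈ Finset.image hH.eigenvalues Finset.univ, ((z - κ)⁻¹ : ℂ) • eigProj H κ‖ ≤ d⁻¹ := by
  apply matrix_norm_le _ _ (inv_nonneg.mpr hd.le)
  intro v
  set e := hH.eigenvectorBasis with he
  rw [wsumApply H hH (fun κ => ((z - κ)⁻¹ : ℂ)) v]
  have normsq : ∀ w : EuclideanSpace ℂ n, ‖w‖ = Real.sqrt (∑ j, ‖e.repr w j‖^2) := by
    intro w
    rw [← e.repr.norm_map w, EuclideanSpace.norm_eq]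
  have hrepr : ∀ j, e.repr (∑ i, ((z - (hH.eigenvalues i : ℂ))⁻¹ : ℂ) • ⟪e i, v⟫_ℂ • e i) j
      = ((z - (hH.eigenvalues j : ℂ))⁻¹ : ℂ) * ⟪e j, v⟫_ℂ := by
    intro j
    rw [OrthonormalBasis.repr_apply_apply, inner_sum]
    simp only [inner_smul_right]
    rw [Finset.sum_congr rfl (fun i _ => by
      rw [orthonormal_iff_ite.mp e.orthonormal j i])]
    simp [Finset.sum_ite_eq]
  rw [normsq, normsq v]
  have step1 : ∑ j, ‖e.repr (∑ i, ((z - (hH.eigenvalues i : ℂ))⁻¹ : ℂ) • ⟪e i, v⟫_ℂ • e i) j‖^2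
      ≤ (d⁻¹)^2 * ∑ j, ‖e.repr v j‖^2 := by
    rw [Finset.mul_sum]
    refine Finset.sum_le_sum fun j _ => ?_
    rw [hrepr j, OrthonormalBasis.repr_apply_apply]
    rw [norm_mul, mul_pow, norm_inv]
    have h1 : ‖z - (hH.eigenvalues j : ℂ)‖⁻¹ ≤ d⁻¹ := inv_anti₀ hd (h j)
    have h2 : (‖z - (hH.eigenvalues j : ℂ)‖⁻¹)^2 ≤ (d⁻¹)^2 :=
      pow_le_pow_left₀ (inv_nonneg.mpr (norm_nonneg _)) h1 2
    exact mul_le_mul_of_nonneg_right h2 (sq_nonneg _)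
  calc Real.sqrt (∑ j, ‖e.repr (∑ i,
          ((z - (hH.eigenvalues i : ℂ))⁻¹ : ℂ) • ⟪e i, v⟫_ℂ • e i) j‖^2)
      ≤ Real.sqrt ((d⁻¹)^2 * ∑ j, ‖e.repr v j‖^2) := Real.sqrt_le_sqrt step1
    _ = d⁻¹ * Real.sqrt (∑ j, ‖e.repr v j‖^2) := by
        rw [Real.sqrt_mul (sq_nonneg _), Real.sqrt_sq (inv_nonneg.mpr hd.le)]

lemma cast_norm (μ κ : ℝ) : ‖((μ : ℂ) - (κ : ℂ))‖ = |μ - κ| := by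
  rw [← Complex.ofReal_sub, Complex.norm_real, Real.norm_eq_abs]

lemma eig_perturb [Nonempty n] (H₀ H₁ : Matrix n n ℂ) (hH₀ : H₀.IsHermitian)
    (hH₁ : H₁.IsHermitian) (j : n) :
    ∃ i, |hH₁.eigenvalues j - hH₀.eigenvalues i| ≤ ‖H₁ - H₀‖ := by
  by_contra hcon
  push_neg at hcon
  set μ := hH₁.eigenvalues j with hμ
  set d := Finset.univ.inf' Finset.univ_nonempty (fun i => |μ - hH₀.eigenvalues i|) with hdef
  have hdi : ∀ i, d ≤ |μ - hH₀.eigenvalues i| := fun i => Finset.inf'_le _ (Finset.mem_univ i)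
  have hεd : ‖H₁ - H₀‖ < d := by
    rw [hdef, Finset.lt_inf'_iff]
    exact fun i _ => hcon i
  have hd : 0 < d := lt_of_le_of_lt (norm_nonneg _) hεd
  have hz : ∀ i, (μ : ℂ) ≠ (hH₀.eigenvalues i : ℂ) := by
    intro i heq
    have : |μ - hH₀.eigenvalues i| = 0 := by
      rw [← cast_norm, heq, sub_self, norm_zero]
    linarith [hdi i]
  have h1 := resSum_mul H₀ hH₀ (μ : ℂ) hz
  set r := ∑ κ ∈ Finset.image hH₀.eigenvalues Finset.univ,
      (((μ:ℂ) - κ)⁻¹ : ℂ) • eigProj H₀ κ with hr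
  have h1' : r * ((μ:ℂ) • (1 : Matrix n n ℂ) - H₀) = 1 := mul_eq_one_comm.mp h1
  have hnorm : ‖r‖ ≤ d⁻¹ := by
    apply resSum_norm H₀ hH₀ _ d hd
    intro i; rw [cast_norm]; exact hdi i
  set v := hH₁.eigenvectorBasis j with hv
  have hv0 : v ≠ 0 := hH₁.eigenvectorBasis.orthonormal.ne_zero j
  have hvpos : 0 < ‖v‖ := norm_pos_iff.mpr hv0
  have hey : Matrix.toEuclideanLin ((μ:ℂ) • (1 : Matrix n n ℂ) - H₀) v
      = Matrix.toEuclideanLin (H₁ - H₀) v := by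
    rw [map_sub, map_sub, _root_.map_smul, toEuclideanLin_one]
    have := basisApply H₁ hH₁ j
    rw [LinearMap.sub_apply, LinearMap.sub_apply, LinearMap.smul_apply, LinearMap.id_apply,
      ← hv, ← hμ] at *
    rw [this]
  have hkey : v = Matrix.toEuclideanLin r (Matrix.toEuclideanLin (H₁ - H₀) v) := by
    conv_lhs => rw [show v = Matrix.toEuclideanLin (1 : Matrix n n ℂ) v by
      rw [toEuclideanLin_one, LinearMap.id_apply]]
    rw [← h1', toEuclideanLin_mul, LinearMap.comp_apply, hey]
  have hb : ‖v‖ ≤ d⁻¹ * (‖H₁ - H₀‖ * ‖v‖) := by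
    calc ‖v‖ = ‖Matrix.toEuclideanLin r (Matrix.toEuclideanLin (H₁ - H₀) v)‖ := by rw [← hkey]
      _ ≤ ‖r‖ * ‖Matrix.toEuclideanLin (H₁ - H₀) v‖ := matrix_apply_le _ _
      _ ≤ ‖r‖ * (‖H₁ - H₀‖ * ‖v‖) := by
          refine mul_le_mul_of_nonneg_left (matrix_apply_le _ _) (norm_nonneg _)
      _ ≤ d⁻¹ * (‖H₁ - H₀‖ * ‖v‖) := by
          refine mul_le_mul_of_nonneg_right hnorm (by positivity)
  have h2 : d * ‖v‖ ≤ d * (d⁻¹ * (‖H₁ - H₀‖ * ‖v‖)) := mul_le_mul_of_nonneg_left hb hd.le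
  rw [← mul_assoc, mul_inv_cancel₀ hd.ne', one_mul] at h2
  nlinarith

lemma normsq_c (w : ℂ) : ‖w‖^2 = w.re^2 + w.im^2 := by
  rw [Complex.sq_norm, Complex.normSq_apply]; ring

lemma sphere_dist (c R κ : ℝ) (z : ℂ) (hz : z ∈ Metric.sphere (c:ℂ) R) :
    |(|κ - c| - R)| ≤ ‖z - (κ:ℂ)‖ := by
  rw [mem_sphere_iff_norm] at hz
  have hR : 0 ≤ R := hz ▸ norm_nonneg _
  have h1 : (z.re - c)^2 + z.im^2 = R^2 := by
    have h0 := normsq_c (z - (c:ℂ))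
    rw [hz] at h0
    simpa using h0.symm
  set x := z.re - c with hx
  set t := κ - c with ht
  have hxR : |x| ≤ R := by
    rw [← Real.sqrt_sq_eq_abs, ← Real.sqrt_sq hR]
    apply Real.sqrt_le_sqrt; nlinarith [sq_nonneg z.im]
  have hxt : x * t ≤ R * |t| :=
    calc x * t ≤ |x * t| := le_abs_self _
      _ = |x| * |t| := abs_mul _ _
      _ ≤ R * |t| := mul_le_mul_of_nonneg_right hxR (abs_nonneg t)
  have h2 : (|t| - R)^2 ≤ ‖z - (κ:ℂ)‖^2 := by
    rw [normsq_c]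
    have hre : (z - (κ:ℂ)).re = x - t := by simp [hx, ht]
    have him : (z - (κ:ℂ)).im = z.im := by simp
    rw [hre, him]
    nlinarith [sq_abs t]
  calc |(|κ - c| - R)| = Real.sqrt ((|t| - R)^2) := by rw [Real.sqrt_sq_eq_abs]
    _ ≤ Real.sqrt (‖z - (κ:ℂ)‖^2) := Real.sqrt_le_sqrt h2
    _ = ‖z - (κ:ℂ)‖ := Real.sqrt_sq (norm_nonneg _)

lemma circleIntegral_finset_sum {E : Type*} [NormedAddCommGroup E] [NormedSpace ℂ E]
    {ι : Type*} (s : Finset ι) (f : ι → ℂ → E) (c : ℂ) (R : ℝ)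
    (h : ∀ i ∈ s, CircleIntegrable (f i) c R) :
    (∮ z in C(c,R), ∑ i ∈ s, f i z) = ∑ i ∈ s, ∮ z in C(c,R), f i z := by
  simp only [circleIntegral, Finset.smul_sum]
  exact intervalIntegral.integral_finset_sum fun i hi => (h i hi).out

lemma circleIntegral_sub_inv_zero {c w : ℂ} {R : ℝ} (hR : 0 ≤ R)
    (hw : w ∉ Metric.closedBall c R) :
    (∮ z in C(c, R), (z - w)⁻¹) = 0 := by
  apply Complex.circleIntegral_eq_zero_of_differentiable_on_off_countable hR
    Set.countable_empty
  · intro z hzm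
    have hne : z ≠ w := fun h => hw (h ▸ hzm)
    exact ((continuousAt_id.sub continuousAt_const).inv₀
      (sub_ne_zero.mpr hne)).continuousWithinAt
  · intro z hzm
    have hne : z ≠ w := fun h => hw (h ▸ Metric.ball_subset_closedBall hzm.1)
    exact ((differentiableAt_id.sub_const w).inv (sub_ne_zero.mpr hne))

lemma specProj_eq (H : Matrix n n ℂ) (hH : H.IsHermitian) (I : Set ℝ)
    [DecidablePred (· ∈ I)] :
    specProj H I = ∑ κ ∈ (Finset.image hH.eigenvalues Finset.univ).filter (· ∈ I),
      eigProj H κ := by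
  apply finsum_mem_eq_sum_of_inter_support_eq
  ext κ
  simp only [Set.mem_inter_iff, Function.mem_support, Finset.coe_filter, Set.mem_setOf_eq,
    Finset.mem_image, Finset.mem_univ, true_and]
  constructor
  · rintro ⟨hκI, hκ0⟩
    refine ⟨⟨?_, hκI⟩, hκ0⟩
    by_contra h
    push_neg at h
    exact hκ0 (eigProj_eq_zero H hH κ h)
  · rintro ⟨⟨_, hκI⟩, hκ0⟩
    exact ⟨hκI, hκ0⟩

end SectorProjAux

open SectorProjAux Matrix Metric
open scoped InnerProductSpace Real

/-- Lipschitz continuity of the spectral projection onto a `g`-gapped sector `[a,b]` under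
norm-small perturbations: `‖P_{(a-g/2,b+g/2)}(H₁) - P_{[a,b]}(H₀)‖ ≤ 4(b-a+g)ε/g²`. -/
theorem sector_projection_lipschitz
    {n : Type*} [Fintype n] [DecidableEq n]
    (H₀ H₁ : Matrix n n ℂ) (hH₀ : H₀.IsHermitian) (hH₁ : H₁.IsHermitian)
    (a b g : ℝ) (hab : a ≤ b) (hg : 0 < g)
    (hgap : ∀ κ : ℝ, Module.End.HasEigenvalue (Matrix.toEuclideanLin H₀) (κ : ℂ) →
      κ ∉ Set.Ioo (a - g) a ∪ Set.Ioo b (b + g))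
    (hε : ‖H₁ - H₀‖ ≤ g / 4) :
    ‖specProj H₁ (Set.Ioo (a - g / 2) (b + g / 2)) - specProj H₀ (Set.Icc a b)‖ ≤
      4 * (b - a + g) * ‖H₁ - H₀‖ / g ^ 2 := by
  classical
  have hRHS : 0 ≤ 4 * (b - a + g) * ‖H₁ - H₀‖ / g ^ 2 := by
    apply div_nonneg _ (by positivity)
    have : 0 ≤ b - a + g := by linarith
    positivity
  rcases isEmpty_or_nonempty n with hn | hn
  · have hsub : Subsingleton (Matrix n n ℂ) := ⟨fun A B => by ext i j; exact isEmptyElim i⟩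
    rw [Subsingleton.elim (specProj H₁ (Set.Ioo (a - g / 2) (b + g / 2))
      - specProj H₀ (Set.Icc a b)) 0, norm_zero]
    exact hRHS
  set ε := ‖H₁ - H₀‖ with hεdef
  have hε0 : 0 ≤ ε := norm_nonneg _
  set c : ℝ := (a + b) / 2 with hc
  set R : ℝ := (b - a + g) / 2 with hR
  have hR0 : 0 < R := by rw [hR]; linarith
  -- gap classification for the eigenvalues of H₀
  have hgap0 : ∀ i, hH₀.eigenvalues i ≤ a - g ∨
      (a ≤ hH₀.eigenvalues i ∧ hH₀.eigenvalues i ≤ b) ∨ b + g ≤ hH₀.eigenvalues i := by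
    intro i
    have hev : Module.End.HasEigenvalue (Matrix.toEuclideanLin H₀) ((hH₀.eigenvalues i : ℝ):ℂ) :=
      Module.End.hasEigenvalue_of_hasEigenvector
        ⟨basisMem H₀ hH₀ i, hH₀.eigenvectorBasis.orthonormal.ne_zero i⟩
    have hni := hgap _ hev
    rw [Set.mem_union] at hni
    push_neg at hni
    obtain ⟨h1, h2⟩ := hni
    rw [Set.mem_Ioo] at h1 h2
    push_neg at h1 h2
    rcases le_or_gt (hH₀.eigenvalues i) (a - g) with h | h
    · exact Or.inl h
    · rcases le_or_gt (hH₀.eigenvalues i) b with hb | hb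
      · exact Or.inr (Or.inl ⟨h1 h, hb⟩)
      · exact Or.inr (Or.inr (h2 hb))
  have hclass0 : ∀ i, |hH₀.eigenvalues i - c| ≤ R - g/2 ∨ R + g/2 ≤ |hH₀.eigenvalues i - c| := by
    intro i
    rcases hgap0 i with h | h | h
    · right
      have h1 : c - hH₀.eigenvalues i ≤ |hH₀.eigenvalues i - c| := by
        rw [abs_sub_comm]; exact le_abs_self _
      rw [hc, hR] at *; linarith
    · left
      rw [abs_le, hc, hR]
      constructor <;> linarith
    · right
      have h1 : hH₀.eigenvalues i - c ≤ |hH₀.eigenvalues i - c| := le_abs_self _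
      rw [hc, hR] at *; linarith
  -- eigenvalues of H₁ are ε-close to those of H₀
  have hpert : ∀ j, ∃ i, |hH₁.eigenvalues j - hH₀.eigenvalues i| ≤ ε :=
    fun j => eig_perturb H₀ H₁ hH₀ hH₁ j
  have hclass1 : ∀ j, |hH₁.eigenvalues j - c| ≤ R - g/4 ∨ R + g/4 ≤ |hH₁.eigenvalues j - c| := by
    intro j
    obtain ⟨i, hi⟩ := hpert j
    have ht1 : |hH₁.eigenvalues j - c| - |hH₀.eigenvalues i - c|
        ≤ |hH₁.eigenvalues j - hH₀.eigenvalues i| := by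
      have := abs_sub_abs_le_abs_sub (hH₁.eigenvalues j - c) (hH₀.eigenvalues i - c)
      simpa using this
    have ht2 : |hH₀.eigenvalues i - c| - |hH₁.eigenvalues j - c|
        ≤ |hH₁.eigenvalues j - hH₀.eigenvalues i| := by
      have := abs_sub_abs_le_abs_sub (hH₀.eigenvalues i - c) (hH₁.eigenvalues j - c)
      rw [abs_sub_comm (hH₀.eigenvalues i - c)] at this
      simpa [abs_sub_comm] using this
    rcases hclass0 i with h | h
    · left; linarith
    · right; linarith
  -- distances from sphere points to the eigenvalues
  have hz0 : ∀ z ∈ Metric.sphere (c:ℂ) R, ∀ i, g/2 ≤ ‖z - (hH₀.eigenvalues i : ℂ)‖ := by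
    intro z hzs i
    refine le_trans ?_ (sphere_dist c R _ z hzs)
    rcases hclass0 i with h | h
    · calc g/2 ≤ -(|hH₀.eigenvalues i - c| - R) := by linarith
        _ ≤ |(|hH₀.eigenvalues i - c| - R)| := neg_le_abs _
    · calc g/2 ≤ |hH₀.eigenvalues i - c| - R := by linarith
        _ ≤ |(|hH₀.eigenvalues i - c| - R)| := le_abs_self _
  have hz1 : ∀ z ∈ Metric.sphere (c:ℂ) R, ∀ j, g/4 ≤ ‖z - (hH₁.eigenvalues j : ℂ)‖ := by
    intro z hzs j
    refine le_trans ?_ (sphere_dist c R _ z hzs)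
    rcases hclass1 j with h | h
    · calc g/4 ≤ -(|hH₁.eigenvalues j - c| - R) := by linarith
        _ ≤ |(|hH₁.eigenvalues j - c| - R)| := neg_le_abs _
    · calc g/4 ≤ |hH₁.eigenvalues j - c| - R := by linarith
        _ ≤ |(|hH₁.eigenvalues j - c| - R)| := le_abs_self _
  -- the resolvent sums
  set sp₀ := Finset.image hH₀.eigenvalues Finset.univ with hsp₀
  set sp₁ := Finset.image hH₁.eigenvalues Finset.univ with hsp₁
  set r₀ : ℂ → Matrix n n ℂ := fun z => ∑ κ ∈ sp₀, ((z - κ)⁻¹ : ℂ) • eigProj H₀ κ with hr₀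
  set r₁ : ℂ → Matrix n n ℂ := fun z => ∑ κ ∈ sp₁, ((z - κ)⁻¹ : ℂ) • eigProj H₁ κ with hr₁
  have hne0 : ∀ z ∈ Metric.sphere (c:ℂ) R, ∀ i, z ≠ (hH₀.eigenvalues i : ℂ) := by
    intro z hzs i heq
    have := hz0 z hzs i
    rw [heq, sub_self, norm_zero] at this
    linarith
  have hne1 : ∀ z ∈ Metric.sphere (c:ℂ) R, ∀ j, z ≠ (hH₁.eigenvalues j : ℂ) := by
    intro z hzs j heq
    have := hz1 z hzs j
    rw [heq, sub_self, norm_zero] at this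
    linarith
  -- pointwise bound on the sphere
  have hFz : ∀ z ∈ Metric.sphere (c:ℂ) R,
      ‖r₁ z - r₀ z‖ ≤ (g/4)⁻¹ * (ε * (g/2)⁻¹) := by
    intro z hzs
    have e0 : (z • (1 : Matrix n n ℂ) - H₀) * r₀ z = 1 := resSum_mul H₀ hH₀ z (hne0 z hzs)
    have e1 : r₁ z * (z • (1 : Matrix n n ℂ) - H₁) = 1 :=
      mul_eq_one_comm.mp (resSum_mul H₁ hH₁ z (hne1 z hzs))
    have hid : r₁ z * (H₁ - H₀) * r₀ z = r₁ z - r₀ z := by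
      have hs : H₁ - H₀ = (z • (1 : Matrix n n ℂ) - H₀) - (z • (1 : Matrix n n ℂ) - H₁) :=
        (sub_sub_sub_cancel_left _ _ _).symm
      calc r₁ z * (H₁ - H₀) * r₀ z
          = r₁ z * ((z • (1 : Matrix n n ℂ) - H₀) - (z • (1 : Matrix n n ℂ) - H₁)) * r₀ z := by
            rw [← hs]
        _ = r₁ z * ((z • (1 : Matrix n n ℂ) - H₀) * r₀ z)
            - (r₁ z * (z • (1 : Matrix n n ℂ) - H₁)) * r₀ z := by
            rw [mul_sub, sub_mul, mul_assoc]
        _ = r₁ z - r₀ z := by rw [e0, e1, mul_one, one_mul]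
    rw [← hid]
    have hn1 : ‖r₁ z‖ ≤ (g/4)⁻¹ := by
      apply resSum_norm H₁ hH₁ z (g/4) (by linarith)
      exact hz1 z hzs
    have hn0 : ‖r₀ z‖ ≤ (g/2)⁻¹ := by
      apply resSum_norm H₀ hH₀ z (g/2) (by linarith)
      exact hz0 z hzs
    calc ‖r₁ z * (H₁ - H₀) * r₀ z‖ ≤ ‖r₁ z * (H₁ - H₀)‖ * ‖r₀ z‖ := norm_mul_le _ _
      _ ≤ (‖r₁ z‖ * ε) * ‖r₀ z‖ :=
          mul_le_mul_of_nonneg_right (norm_mul_le _ _) (norm_nonneg _)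
      _ ≤ ((g/4)⁻¹ * ε) * (g/2)⁻¹ := by
          apply mul_le_mul
          · exact mul_le_mul_of_nonneg_right hn1 hε0
          · exact hn0
          · exact norm_nonneg _
          · positivity
      _ = (g/4)⁻¹ * (ε * (g/2)⁻¹) := by ring
  -- integrability
  have hint0 : ∀ κ ∈ sp₀, CircleIntegrable (fun z => ((z - κ)⁻¹ : ℂ) • eigProj H₀ κ) (c:ℂ) R := by
    intro κ hκ
    obtain ⟨i, _, rfl⟩ := Finset.mem_image.mp hκ
    apply ContinuousOn.circleIntegrable hR0.le
    apply ContinuousOn.fun_smul _ continuousOn_const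
    apply ContinuousOn.inv₀ (continuousOn_id.sub continuousOn_const)
    intro z hzs
    exact sub_ne_zero.mpr (hne0 z hzs i)
  have hint1 : ∀ κ ∈ sp₁, CircleIntegrable (fun z => ((z - κ)⁻¹ : ℂ) • eigProj H₁ κ) (c:ℂ) R := by
    intro κ hκ
    obtain ⟨j, _, rfl⟩ := Finset.mem_image.mp hκ
    apply ContinuousOn.circleIntegrable hR0.le
    apply ContinuousOn.fun_smul _ continuousOn_const
    apply ContinuousOn.inv₀ (continuousOn_id.sub continuousOn_const)
    intro z hzs
    exact sub_ne_zero.mpr (hne1 z hzs j)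
  have hInt0 : CircleIntegrable r₀ (c:ℂ) R := by
    apply ContinuousOn.circleIntegrable hR0.le
    apply continuousOn_finset_sum
    intro κ hκ
    obtain ⟨i, _, rfl⟩ := Finset.mem_image.mp hκ
    apply ContinuousOn.fun_smul _ continuousOn_const
    apply ContinuousOn.inv₀ (continuousOn_id.sub continuousOn_const)
    intro z hzs
    exact sub_ne_zero.mpr (hne0 z hzs i)
  have hInt1 : CircleIntegrable r₁ (c:ℂ) R := by
    apply ContinuousOn.circleIntegrable hR0.le
    apply continuousOn_finset_sum
    intro κ hκ
    obtain ⟨j, _, rfl⟩ := Finset.mem_image.mp hκ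
    apply ContinuousOn.fun_smul _ continuousOn_const
    apply ContinuousOn.inv₀ (continuousOn_id.sub continuousOn_const)
    intro z hzs
    exact sub_ne_zero.mpr (hne1 z hzs j)
  -- values of the circle integrals of the resolvent sums
  have hval : ∀ (H : Matrix n n ℂ) (sp : Finset ℝ)
      (hint : ∀ κ ∈ sp, CircleIntegrable (fun z => ((z - κ)⁻¹ : ℂ) • eigProj H κ) (c:ℂ) R)
      (hd : ∀ κ ∈ sp, |κ - c| ≠ R),
      (∮ z in C((c:ℂ), R), ∑ κ ∈ sp, ((z - κ)⁻¹ : ℂ) • eigProj H κ)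
        = (2 * (π:ℝ) * Complex.I) • ∑ κ ∈ sp.filter (fun κ => |κ - c| < R), eigProj H κ := by
    intro H sp hint hd
    rw [circleIntegral_finset_sum sp (fun κ z => ((z - κ)⁻¹ : ℂ) • eigProj H κ) _ _ hint]
    have hterm : ∀ κ ∈ sp, (∮ z in C((c:ℂ), R), ((z - κ)⁻¹ : ℂ) • eigProj H κ)
        = (if |κ - c| < R then ((2 * (π:ℝ) * Complex.I) • eigProj H κ) else 0) := by
      intro κ hκ
      rw [circleIntegral.integral_smul_const]
      by_cases hin : |κ - c| < R
      · rw [if_pos hin, circleIntegral.integral_sub_inv_of_mem_ball]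
        rw [mem_ball_iff_norm, cast_norm]
        exact hin
      · rw [if_neg hin]
        rw [circleIntegral_sub_inv_zero hR0.le, zero_smul]
        rw [mem_closedBall_iff_norm, cast_norm]
        push_neg at hin
        exact not_le.mpr (lt_of_le_of_ne hin (Ne.symm (hd κ hκ)))
    rw [Finset.sum_congr rfl hterm, Finset.sum_ite, Finset.sum_const_zero, add_zero,
      Finset.smul_sum]
  have hI0 : (∮ z in C((c:ℂ), R), r₀ z)
      = (2 * (π:ℝ) * Complex.I) • ∑ κ ∈ sp₀.filter (fun κ => |κ - c| < R), eigProj H₀ κ := by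
    apply hval H₀ sp₀ hint0
    intro κ hκ
    obtain ⟨i, _, rfl⟩ := Finset.mem_image.mp hκ
    rcases hclass0 i with h | h <;> intro heq <;> rw [heq] at h <;> linarith
  have hI1 : (∮ z in C((c:ℂ), R), r₁ z)
      = (2 * (π:ℝ) * Complex.I) • ∑ κ ∈ sp₁.filter (fun κ => |κ - c| < R), eigProj H₁ κ := by
    apply hval H₁ sp₁ hint1
    intro κ hκ
    obtain ⟨j, _, rfl⟩ := Finset.mem_image.mp hκ
    rcases hclass1 j with h | h <;> intro heq <;> rw [heq] at h <;> linarith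
  -- identify the filtered sums with the spectral projections
  have hP0 : ∑ κ ∈ sp₀.filter (fun κ => |κ - c| < R), eigProj H₀ κ
      = specProj H₀ (Set.Icc a b) := by
    rw [specProj_eq H₀ hH₀ (Set.Icc a b), ← hsp₀]
    apply Finset.sum_congr _ (fun _ _ => rfl)
    apply Finset.filter_congr
    intro κ hκ
    obtain ⟨i, _, rfl⟩ := Finset.mem_image.mp hκ
    simp only [Set.mem_Icc]
    constructor
    · intro h
      rcases hgap0 i with hcase | hcase | hcase
      · exfalso
        have : c - hH₀.eigenvalues i ≤ |hH₀.eigenvalues i - c| := by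
          rw [abs_sub_comm]; exact le_abs_self _
        rw [hc, hR] at *; linarith
      · exact hcase
      · exfalso
        have : hH₀.eigenvalues i - c ≤ |hH₀.eigenvalues i - c| := le_abs_self _
        rw [hc, hR] at *; linarith
    · intro h
      rw [abs_lt, hc, hR]
      obtain ⟨h1', h2'⟩ := h
      constructor <;> linarith
  have hP1 : ∑ κ ∈ sp₁.filter (fun κ => |κ - c| < R), eigProj H₁ κ
      = specProj H₁ (Set.Ioo (a - g / 2) (b + g / 2)) := by
    rw [specProj_eq H₁ hH₁ (Set.Ioo (a - g / 2) (b + g / 2)), ← hsp₁]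
    apply Finset.sum_congr _ (fun _ _ => rfl)
    apply Finset.filter_congr
    intro κ hκ
    simp only [Set.mem_Ioo, abs_lt]
    constructor
    · rintro ⟨h1, h2⟩
      constructor <;> (rw [hc, hR] at *; linarith)
    · rintro ⟨h1, h2⟩
      constructor <;> (rw [hc, hR] at *; linarith)
  -- put everything together
  have hdiff : (∮ z in C((c:ℂ), R), (r₁ z - r₀ z))
      = (2 * (π:ℝ) * Complex.I) • (specProj H₁ (Set.Ioo (a - g / 2) (b + g / 2))
          - specProj H₀ (Set.Icc a b)) := by
    rw [circleIntegral.integral_sub hInt1 hInt0, hI0, hI1, hP0, hP1, smul_sub]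
  have hbound : ‖∮ z in C((c:ℂ), R), (r₁ z - r₀ z)‖
      ≤ 2 * π * R * ((g/4)⁻¹ * (ε * (g/2)⁻¹)) :=
    circleIntegral.norm_integral_le_of_norm_le_const hR0.le hFz
  rw [hdiff] at hbound
  rw [norm_smul] at hbound
  have h2pi : ‖((2 * (π:ℝ) * Complex.I : ℂ))‖ = 2 * π := by
    rw [norm_mul, norm_mul, Complex.norm_I, mul_one]
    simp [Complex.norm_real, Real.pi_nonneg, abs_of_nonneg]
  rw [h2pi] at hbound
  have hπ : 0 < 2 * π := by positivity
  have hfin : ‖specProj H₁ (Set.Ioo (a - g / 2) (b + g / 2)) - specProj H₀ (Set.Icc a b)‖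
      ≤ R * ((g/4)⁻¹ * (ε * (g/2)⁻¹)) := by
    have := (mul_le_mul_iff_of_pos_left hπ).mp (by linarith [hbound] : 2 * π *
      ‖specProj H₁ (Set.Ioo (a - g / 2) (b + g / 2)) - specProj H₀ (Set.Icc a b)‖
        ≤ 2 * π * (R * ((g/4)⁻¹ * (ε * (g/2)⁻¹))))
    exact this
  refine le_trans hfin (le_of_eq ?_)
  rw [hR]
  field_simp
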